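/- arXiv:1504.02755 — 2 statements merged into one kernel-verified Lean document; each statement's English description precedes it below -/
import Mathlib

section
/- Let W be a graphon, G a finite graph with m edges, and 1 ≤ k ≤ m. If G_k denotes a uniformly random k-edge subgraph of G (on the same vertex set), then E[t(G_k, W)] = E_{x,X}[ C(I(G), k) / C(m, k) ], where for x ∈ [0,1]^{V(G)} chosen uniformly, X is a family of independent Bernoulli indicators with P(X_{ij} = 1) = W(x_i, x_j) for each edge {i,j} of G, and I(G) = Σ_{{i,j} ∈ E(G)} X_{ij}. -/
open MeasureTheory Finset

/-- Lebesgue measure restricted to `[0,1]`. -/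
noncomputable def μ01 : Measure ℝ := volume.restrict (Set.Icc 0 1)

/-- Product measure on `V → ℝ`, each coordinate uniform on `[0,1]`. -/
noncomputable def πμ (V : Type*) [Fintype V] : Measure (V → ℝ) :=
  Measure.pi fun _ => μ01

/-- `W` is a graphon: symmetric, measurable, with values in `[0,1]`. -/
def IsGraphon (W : ℝ → ℝ → ℝ) : Prop :=
  Measurable (Function.uncurry W) ∧ (∀ x y, W x y = W y x) ∧
    ∀ x y, W x y ∈ Set.Icc (0 : ℝ) 1

/-- Value of `W` on an unordered pair of vertices (for symmetric `W` this is
just `W (x i) (x j)` on the edge `{i, j}`). -/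
noncomputable def edgeVal (W : ℝ → ℝ → ℝ) {V : Type*} (x : V → ℝ) : Sym2 V → ℝ :=
  Sym2.lift ⟨fun i j => (W (x i) (x j) + W (x j) (x i)) / 2,
    fun i j => by simp [add_comm]⟩

/-- `∏_{{i,j} ∈ s} W(x_i, x_j)` for a finite set `s` of unordered pairs. -/
noncomputable def prodEdges (W : ℝ → ℝ → ℝ) {V : Type*} (s : Finset (Sym2 V))
    (x : V → ℝ) : ℝ :=
  ∏ e ∈ s, edgeVal W x e

/-- Homomorphism density of the graph on `V` with edge set `s` in `W`. -/
noncomputable def homDensitySet {V : Type*} [Fintype V] (s : Finset (Sym2 V))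
    (W : ℝ → ℝ → ℝ) : ℝ :=
  ∫ x : V → ℝ, prodEdges W s x ∂(πμ V)

/-- Homomorphism density `t(F, W)`. -/
noncomputable def homDensity {V : Type*} [Fintype V] (F : SimpleGraph V)
    [Fintype F.edgeSet] (W : ℝ → ℝ → ℝ) : ℝ :=
  homDensitySet F.edgeFinset W

/-- `𝔾(G, W)(F)`: the probability that sampling along `G` from `W` yields the
edge-subgraph of `G` with edge set `s`. -/
noncomputable def sampleProb {V : Type*} [Fintype V] [DecidableEq V]
    (G : SimpleGraph V) [Fintype G.edgeSet] (W : ℝ → ℝ → ℝ)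
    (s : Finset (Sym2 V)) : ℝ :=
  ∫ x : V → ℝ,
    (∏ e ∈ s, edgeVal W x e) * ∏ e ∈ G.edgeFinset \ s, (1 - edgeVal W x e) ∂(πμ V)

/-- `ℕ(G, W)(k)`: probability that the `W`-sample along `G` has exactly `k` edges. -/
noncomputable def edgeCountDist {V : Type*} [Fintype V] [DecidableEq V]
    (G : SimpleGraph V) [Fintype G.edgeSet] (W : ℝ → ℝ → ℝ) (k : ℕ) : ℝ :=
  ∑ s ∈ G.edgeFinset.powerset.filter (fun s => s.card = k), sampleProb G W s

/-- `E[t(G_k, W)]` where `G_k` is a uniformly random `k`-edge subgraph of `G`. -/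
noncomputable def avgSubDensity {V : Type*} [Fintype V] [DecidableEq V]
    (G : SimpleGraph V) [Fintype G.edgeSet] (W : ℝ → ℝ → ℝ) (k : ℕ) : ℝ :=
  ((G.edgeFinset.card.choose k : ℝ))⁻¹ *
    ∑ s ∈ G.edgeFinset.powerset.filter (fun s => s.card = k), homDensitySet s W

/-- `G` contains a `4`-cycle. -/
def ContainsC4 {V : Type*} (G : SimpleGraph V) : Prop :=
  ∃ a b c d : V, a ≠ b ∧ a ≠ c ∧ a ≠ d ∧ b ≠ c ∧ b ≠ d ∧ c ≠ d ∧
    G.Adj a b ∧ G.Adj b c ∧ G.Adj c d ∧ G.Adj d a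

section Aux

instance : IsProbabilityMeasure μ01 := by
  constructor
  simp [μ01, Real.volume_Icc]

instance (V : Type*) [Fintype V] : IsProbabilityMeasure (πμ V) := by
  unfold πμ; infer_instance

lemma edgeVal_measurable {n : ℕ} {W : ℝ → ℝ → ℝ} (hW : IsGraphon W)
    (e : Sym2 (Fin n)) : Measurable (fun x : Fin n → ℝ => edgeVal W x e) := by
  induction e using Sym2.inductionOn with
  | hf i j =>
    have hp1 : Measurable fun a : Fin n → ℝ => (a i, a j) :=
      (measurable_pi_apply i).prodMk (measurable_pi_apply j)
    have hp2 : Measurable fun a : Fin n → ℝ => (a j, a i) :=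
      (measurable_pi_apply j).prodMk (measurable_pi_apply i)
    have h1 : Measurable fun x : Fin n → ℝ => W (x i) (x j) := by
      exact hW.1.comp hp1
    have h2 : Measurable fun x : Fin n → ℝ => W (x j) (x i) := by
      exact hW.1.comp hp2
    exact (h1.add h2).div_const 2

lemma edgeVal_mem {n : ℕ} {W : ℝ → ℝ → ℝ} (hW : IsGraphon W) (x : Fin n → ℝ)
    (e : Sym2 (Fin n)) : edgeVal W x e ∈ Set.Icc (0 : ℝ) 1 := by
  induction e using Sym2.inductionOn with
  | hf i j =>
    have h1 := hW.2.2 (x i) (x j)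
    have h2 := hW.2.2 (x j) (x i)
    simp only [Set.mem_Icc] at h1 h2 ⊢
    constructor
    · show 0 ≤ (W (x i) (x j) + W (x j) (x i)) / 2
      linarith [h1.1, h2.1]
    · show (W (x i) (x j) + W (x j) (x i)) / 2 ≤ 1
      linarith [h1.2, h2.2]

lemma term_mem {n : ℕ} {W : ℝ → ℝ → ℝ} (hW : IsGraphon W) (x : Fin n → ℝ)
    (u v : Finset (Sym2 (Fin n))) :
    (∏ e ∈ u, edgeVal W x e) * ∏ e ∈ v, (1 - edgeVal W x e) ∈ Set.Icc (0 : ℝ) 1 := by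
  have hu0 : (0:ℝ) ≤ ∏ e ∈ u, edgeVal W x e :=
    Finset.prod_nonneg fun e _ => (edgeVal_mem hW x e).1
  have hu1 : ∏ e ∈ u, edgeVal W x e ≤ 1 :=
    Finset.prod_le_one (fun e _ => (edgeVal_mem hW x e).1)
      (fun e _ => (edgeVal_mem hW x e).2)
  have hv0 : (0:ℝ) ≤ ∏ e ∈ v, (1 - edgeVal W x e) :=
    Finset.prod_nonneg fun e _ => by linarith [(edgeVal_mem hW x e).2]
  have hv1 : ∏ e ∈ v, (1 - edgeVal W x e) ≤ 1 :=
    Finset.prod_le_one (fun e _ => by linarith [(edgeVal_mem hW x e).2])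
      (fun e _ => by linarith [(edgeVal_mem hW x e).1])
  exact ⟨mul_nonneg hu0 hv0, mul_le_one₀ hu1 hv0 hv1⟩

lemma integrable_term {n : ℕ} {W : ℝ → ℝ → ℝ} (hW : IsGraphon W)
    (u v : Finset (Sym2 (Fin n))) :
    Integrable (fun x : Fin n → ℝ =>
      (∏ e ∈ u, edgeVal W x e) * ∏ e ∈ v, (1 - edgeVal W x e)) (πμ (Fin n)) := by
  have hm : Measurable (fun x : Fin n → ℝ =>
      (∏ e ∈ u, edgeVal W x e) * ∏ e ∈ v, (1 - edgeVal W x e)) := by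
    exact (Finset.measurable_prod u fun e _ => edgeVal_measurable hW e).mul
      (Finset.measurable_prod v fun e _ => (measurable_const.sub (edgeVal_measurable hW e)))
  refine (integrable_const (1:ℝ)).mono' hm.aestronglyMeasurable (ae_of_all _ fun x => ?_)
  have h := term_mem hW x u v
  rw [Real.norm_eq_abs, abs_of_nonneg h.1]
  simpa using h.2

lemma expand_prod {n : ℕ} {W : ℝ → ℝ → ℝ} {G : SimpleGraph (Fin n)}
    [Fintype G.edgeSet] {s : Finset (Sym2 (Fin n))} (hs : s ⊆ G.edgeFinset)
    (x : Fin n → ℝ) :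
    ∏ e ∈ s, edgeVal W x e =
      ∑ u ∈ G.edgeFinset.powerset.filter (fun u => s ⊆ u),
        (∏ e ∈ u, edgeVal W x e) * ∏ e ∈ G.edgeFinset \ u, (1 - edgeVal W x e) := by
  have h1 : ∏ e ∈ G.edgeFinset \ s, ((edgeVal W x e) + (1 - edgeVal W x e)) = 1 := by
    simp
  have key : ∏ e ∈ s, edgeVal W x e =
      ∑ t ∈ (G.edgeFinset \ s).powerset,
        (∏ e ∈ s ∪ t, edgeVal W x e) * ∏ e ∈ G.edgeFinset \ (s ∪ t), (1 - edgeVal W x e) := by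
    conv_lhs => rw [← mul_one (∏ e ∈ s, edgeVal W x e), ← h1]
    rw [Finset.prod_add, Finset.mul_sum]
    refine Finset.sum_congr rfl fun t ht => ?_
    rw [Finset.mem_powerset] at ht
    have hdisj : Disjoint s t := Finset.disjoint_left.mpr fun a ha hat =>
      (Finset.mem_sdiff.mp (ht hat)).2 ha
    rw [← mul_assoc, ← Finset.prod_union hdisj]
    congr 1
    rw [sdiff_sdiff]
    simp [Finset.sup_eq_union]
  rw [key]
  refine Finset.sum_bij' (fun t _ => s ∪ t) (fun u _ => u \ s) ?_ ?_ ?_ ?_ ?_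
  · intro t ht
    rw [Finset.mem_powerset] at ht
    rw [Finset.mem_filter, Finset.mem_powerset]
    exact ⟨Finset.union_subset hs (ht.trans Finset.sdiff_subset), Finset.subset_union_left⟩
  · intro u hu
    rw [Finset.mem_filter, Finset.mem_powerset] at hu
    rw [Finset.mem_powerset]
    exact Finset.sdiff_subset_sdiff hu.1 Finset.Subset.rfl
  · intro t ht
    rw [Finset.mem_powerset] at ht
    show (s ∪ t) \ s = t
    rw [Finset.union_sdiff_cancel_left (Finset.disjoint_left.mpr fun a ha hat =>
      (Finset.mem_sdiff.mp (ht hat)).2 ha)]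
  · intro u hu
    rw [Finset.mem_filter, Finset.mem_powerset] at hu
    show s ∪ u \ s = u
    exact Finset.union_sdiff_of_subset hu.2
  · intro t ht; rfl

end Aux

/-- `E[t(G_k, W)] = E_{x,X}[C(I(G), k) / C(m, k)]`, where the
right-hand side is computed via the distribution `ℕ(G, W)` of `I(G)`. -/
theorem stmt2 {n : ℕ} (G : SimpleGraph (Fin n)) [Fintype G.edgeSet]
    (W : ℝ → ℝ → ℝ) (hW : IsGraphon W) (k : ℕ) (hk1 : 1 ≤ k)
    (hkm : k ≤ G.edgeFinset.card) :
    avgSubDensity G W k =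
      ∑ j ∈ Finset.range (G.edgeFinset.card + 1),
        edgeCountDist G W j * ((j.choose k : ℝ) / (G.edgeFinset.card.choose k : ℝ)) := by
  classical
  set E := G.edgeFinset with hE
  set m := E.card with hm
  -- rewrite homDensitySet as a sum of sampleProb's
  have hhom : ∀ s ∈ E.powerset, homDensitySet s W =
      ∑ u ∈ E.powerset.filter (fun u => s ⊆ u), sampleProb G W u := by
    intro s hs
    rw [Finset.mem_powerset] at hs
    unfold homDensitySet sampleProb
    rw [show (fun x : Fin n → ℝ => prodEdges W s x) =
        fun x => ∑ u ∈ E.powerset.filter (fun u => s ⊆ u),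
          (∏ e ∈ u, edgeVal W x e) * ∏ e ∈ G.edgeFinset \ u, (1 - edgeVal W x e) from
      funext fun x => expand_prod hs x]
    exact integral_finset_sum _ fun u _ => integrable_term hW u (G.edgeFinset \ u)
  -- LHS
  have hLHS : avgSubDensity G W k =
      ((m.choose k : ℝ))⁻¹ * ∑ u ∈ E.powerset, (u.card.choose k : ℝ) * sampleProb G W u := by
    unfold avgSubDensity
    congr 1
    rw [Finset.sum_congr rfl (fun s hs => hhom s (Finset.mem_filter.mp hs).1)]
    rw [Finset.sum_comm' (s := E.powerset.filter (fun s => s.card = k))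
      (t := fun s => E.powerset.filter (fun u => s ⊆ u))
      (t' := E.powerset) (s' := fun u => u.powerset.filter (fun s => s.card = k))
      (f := fun _ u => sampleProb G W u)]
    · refine Finset.sum_congr rfl fun u hu => ?_
      rw [Finset.sum_const, ← Finset.powersetCard_eq_filter, Finset.card_powersetCard,
        nsmul_eq_mul]
    · intro s u
      simp only [Finset.mem_filter, Finset.mem_powerset]
      constructor
      · rintro ⟨⟨hsE, hsk⟩, huE, hsu⟩; exact ⟨⟨hsu, hsk⟩, huE⟩
      · rintro ⟨⟨hsu, hsk⟩, huE⟩; exact ⟨⟨hsu.trans huE, hsk⟩, huE, hsu⟩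
  -- RHS
  have hRHS : (∑ j ∈ Finset.range (m + 1),
      edgeCountDist G W j * ((j.choose k : ℝ) / (m.choose k : ℝ))) =
      ∑ u ∈ E.powerset, sampleProb G W u * ((u.card.choose k : ℝ) / (m.choose k : ℝ)) := by
    unfold edgeCountDist
    rw [← Finset.sum_fiberwise_of_maps_to (g := fun u : Finset (Sym2 (Fin n)) => u.card)
      (t := Finset.range (m + 1))
      (fun u hu => Finset.mem_range.mpr (Nat.lt_succ_of_le
        (Finset.card_le_card (Finset.mem_powerset.mp hu))))
      (fun u => sampleProb G W u * ((u.card.choose k : ℝ) / (m.choose k : ℝ)))]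
    refine Finset.sum_congr rfl fun j _ => ?_
    rw [Finset.sum_mul]
    exact Finset.sum_congr rfl fun u hu => by
      rw [(Finset.mem_filter.mp hu).2]
  rw [hLHS, hRHS, Finset.mul_sum]
  exact Finset.sum_congr rfl fun u _ => by ring
end

section
/- Let W be a graphon whose degree function equals p almost everywhere. Then every forest F (graph with no cycles) satisfies t(F, W) = p^{|E(F)|}. -/
open MeasureTheory Finset
open scoped ENNReal

instance inst_s8 : IsProbabilityMeasure μ01 :=
  ⟨by simp [μ01, Real.volume_Icc]⟩

theorem πμ_def (V : Type*) [Fintype V] : πμ V = Measure.pi fun _ => μ01 := rfl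

instance inst_s8_2 (V : Type*) [Fintype V] : IsProbabilityMeasure (πμ V) := by
  rw [πμ_def]; infer_instance

theorem edgeVal_mk {V : Type*} (W : ℝ → ℝ → ℝ) (x : V → ℝ) (i j : V) :
    edgeVal W x s(i, j) = (W (x i) (x j) + W (x j) (x i)) / 2 := rfl

theorem measurable_edgeVal {V : Type*} [Fintype V] {W : ℝ → ℝ → ℝ}
    (hW : Measurable (Function.uncurry W)) (e : Sym2 V) :
    Measurable fun x : V → ℝ => edgeVal W x e := by
  induction e using Sym2.ind with
  | _ i j =>
    have h1 : Measurable fun x : V → ℝ => W (x i) (x j) :=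
      Measurable.comp (f := fun x : V → ℝ => ((x i, x j) : ℝ × ℝ)) hW ((measurable_pi_apply i).prodMk (measurable_pi_apply j))
    have h2 : Measurable fun x : V → ℝ => W (x j) (x i) :=
      Measurable.comp (f := fun x : V → ℝ => ((x j, x i) : ℝ × ℝ)) hW ((measurable_pi_apply j).prodMk (measurable_pi_apply i))
    simpa [edgeVal_mk] using (h1.add h2).div_const 2

theorem edgeVal_nonneg {V : Type*} {W : ℝ → ℝ → ℝ} (hW : IsGraphon W)
    (x : V → ℝ) (e : Sym2 V) : 0 ≤ edgeVal W x e := by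
  induction e using Sym2.ind with
  | _ i j =>
    rw [edgeVal_mk]
    have h1 := (hW.2.2 (x i) (x j)).1
    have h2 := (hW.2.2 (x j) (x i)).1
    linarith

theorem edgeVal_update_of_not_mem {V : Type*} [DecidableEq V] {W : ℝ → ℝ → ℝ}
    {x : V → ℝ} {v : V} {t : ℝ} {e : Sym2 V} (he : v ∉ e) :
    edgeVal W (Function.update x v t) e = edgeVal W x e := by
  induction e using Sym2.ind with
  | _ i j =>
    rw [Sym2.mem_iff] at he
    push_neg at he
    rw [edgeVal_mk, edgeVal_mk, Function.update_of_ne (Ne.symm he.1),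
      Function.update_of_ne (Ne.symm he.2)]

open SimpleGraph in
theorem exists_leaf {V : Type*} [Fintype V] {G : SimpleGraph V} (hG : G.IsAcyclic)
    {u₀ v₀ : V} (h₀ : G.Adj u₀ v₀) :
    ∃ a b : V, G.Adj a b ∧ ∀ c, G.Adj b c → c = a := by
  classical
  set P : ℕ → Prop := fun n => ∃ (u v : V) (q : G.Walk u v), q.IsPath ∧ q.length = n with hP
  have hbound : ∀ n, P n → n < Fintype.card V := by
    rintro n ⟨u, v, q, hq, rfl⟩; exact hq.length_lt
  have hP1 : P 1 := ⟨u₀, v₀, Walk.cons h₀ Walk.nil, by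
    simp [Walk.isPath_def, h₀.ne], by simp⟩
  set N := Nat.findGreatest P (Fintype.card V) with hN
  have hN1 : 1 ≤ N := Nat.le_findGreatest (hbound 1 hP1).le hP1
  have hNP : P N := Nat.findGreatest_spec (P := P) (hbound 1 hP1).le hP1
  obtain ⟨u, v, q, hq, hl⟩ := hNP
  have hne : u ≠ v := by
    rintro rfl
    rw [Walk.isPath_iff_eq_nil] at hq
    rw [hq] at hl
    simp at hl; omega
  obtain ⟨a, ha, r', hr'⟩ := (q.reverse).exists_eq_cons_of_ne hne.symm
  refine ⟨a, v, ha.symm, ?_⟩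
  intro c hc
  by_cases hcs : c ∈ q.reverse.support
  · have hrp : q.reverse.IsPath := hq.reverse
    have hpath1 : (Path.singleton hc) =
        (⟨q.reverse.takeUntil c hcs, hrp.takeUntil hcs⟩ : G.Path v c) :=
      hG.path_unique _ _
    have heq : Walk.cons hc Walk.nil = q.reverse.takeUntil c hcs :=
      congrArg Subtype.val hpath1
    have hspec := q.reverse.take_spec hcs
    have h1 : q.reverse.getVert 1 = c := by
      conv_lhs => rw [← hspec, ← heq]
      simp [Walk.cons_append]
    have h2 : q.reverse.getVert 1 = a := by
      rw [hr']; exact (Walk.getVert_cons_succ (n := 0) _ ha).trans (Walk.getVert_zero _)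
    rw [← h1, h2]
  · have hp2 : (Walk.cons hc.symm q.reverse).IsPath := hq.reverse.cons hcs
    have hPN1 : P (N + 1) := ⟨c, u, _, hp2, by simp [hl]⟩
    exact absurd hPN1 (Nat.findGreatest_is_greatest (Nat.lt_succ_self N)
      (hbound _ hPN1).le)

theorem key_lintegral {V : Type*} [Fintype V] [DecidableEq V] {F : SimpleGraph V}
    (hF : F.IsAcyclic) [Fintype F.edgeSet] {W : ℝ → ℝ → ℝ} (hW : IsGraphon W) {p : ℝ}
    (hdeg : ∀ᵐ x ∂μ01, (∫ y, W x y ∂μ01) = p) :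
    ∀ (n : ℕ) (s : Finset (Sym2 V)), s.card = n → s ⊆ F.edgeFinset →
      ∫⁻ x, ∏ e ∈ s, ENNReal.ofReal (edgeVal W x e) ∂(πμ V) =
        ENNReal.ofReal p ^ n := by
  -- the a.e. degree fact in `ℝ≥0∞`
  have hWint : ∀ r : ℝ, Integrable (fun t => W r t) μ01 := by
    intro r
    refine ⟨(Measurable.comp (f := fun t : ℝ => ((r, t) : ℝ × ℝ)) hW.1
      (measurable_const.prodMk measurable_id)).aestronglyMeasurable, ?_⟩
    refine HasFiniteIntegral.of_bounded (C := 1) (Filter.Eventually.of_forall fun t => ?_)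
    rw [Real.norm_eq_abs, abs_of_nonneg (hW.2.2 r t).1]
    exact (hW.2.2 r t).2
  set D : ℝ → ℝ≥0∞ := fun r => ∫⁻ t, ENNReal.ofReal (W r t) ∂μ01 with hDdef
  have hD : ∀ᵐ r ∂μ01, D r = ENNReal.ofReal p := by
    filter_upwards [hdeg] with r hr
    rw [hDdef]
    simp only
    rw [← ofReal_integral_eq_lintegral_ofReal (hWint r)
      (Filter.Eventually.of_forall fun t => (hW.2.2 r t).1), hr]
  have hDmeas : Measurable D :=
    Measurable.lintegral_prod_right' (f := fun q : ℝ × ℝ => ENNReal.ofReal (W q.1 q.2))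
      (ENNReal.measurable_ofReal.comp hW.1)
  intro n
  induction n with
  | zero =>
    intro s hcard _
    rw [Finset.card_eq_zero] at hcard
    subst hcard
    simp
  | succ n ih =>
    intro s hcard hsub
    -- find a leaf
    have hne : s.Nonempty := Finset.card_pos.mp (by omega)
    set G' : SimpleGraph V := SimpleGraph.fromEdgeSet (↑s) with hG'
    have hle : G' ≤ F := by
      intro a b hab
      rw [hG', SimpleGraph.fromEdgeSet_adj] at hab
      have := hsub hab.1
      rwa [SimpleGraph.mem_edgeFinset, SimpleGraph.mem_edgeSet] at this
    have hG'ac : G'.IsAcyclic := fun v c hc => hF (c.mapLe hle) (hc.mapLe hle)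
    obtain ⟨e₀, he₀⟩ := hne
    have hadj : ∃ i j : V, G'.Adj i j := by
      revert he₀
      induction e₀ using Sym2.ind with
      | _ i j =>
        intro he₀
        have hij : i ≠ j := by
          have := hsub he₀
          rw [SimpleGraph.mem_edgeFinset] at this
          intro h; exact (SimpleGraph.not_isDiag_of_mem_edgeSet F this) (by simp [h])
        exact ⟨i, j, by rw [hG', SimpleGraph.fromEdgeSet_adj]; exact ⟨he₀, hij⟩⟩
    obtain ⟨i, j, hij⟩ := hadj
    obtain ⟨a, v, hav, huniq⟩ := exists_leaf hG'ac hij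
    have he : s(a, v) ∈ s := by
      rw [hG', SimpleGraph.fromEdgeSet_adj] at hav; exact hav.1
    have hav' : a ≠ v := by
      rw [hG', SimpleGraph.fromEdgeSet_adj] at hav; exact hav.2
    have hvnot : ∀ e' ∈ s.erase s(a, v), v ∉ e' := by
      intro e' he' hve'
      obtain ⟨he'ne, he's⟩ := Finset.mem_erase.mp he'
      obtain ⟨c, rfl⟩ := Sym2.mem_iff_exists.mp hve'
      have hvc : v ≠ c := by
        have := hsub he's
        rw [SimpleGraph.mem_edgeFinset] at this
        intro h; exact (SimpleGraph.not_isDiag_of_mem_edgeSet F this) (by simp [h])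
      have : G'.Adj v c := by rw [hG', SimpleGraph.fromEdgeSet_adj]; exact ⟨he's, hvc⟩
      have := huniq c this
      subst this
      exact he'ne (Sym2.eq_swap)
    -- analytic step
    set t := s.erase s(a, v) with ht
    have htsub : t ⊆ F.edgeFinset := fun e' he' => hsub (Finset.mem_of_mem_erase he')
    have htcard : t.card = n := by rw [ht, Finset.card_erase_of_mem he, hcard]; omega
    set C : (V → ℝ) → ℝ≥0∞ := fun x => ∏ e ∈ t, ENNReal.ofReal (edgeVal W x e) with hC
    have hCmeas : Measurable C :=
      Finset.measurable_prod _ fun e _ =>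
        ENNReal.measurable_ofReal.comp (measurable_edgeVal hW.1 e)
    set f : (V → ℝ) → ℝ≥0∞ := fun x => ∏ e ∈ s, ENNReal.ofReal (edgeVal W x e) with hfdef
    have hfmeas : Measurable f :=
      Finset.measurable_prod _ fun e _ =>
        ENNReal.measurable_ofReal.comp (measurable_edgeVal hW.1 e)
    have hCupd : ∀ (x : V → ℝ) (xv : ℝ), C (Function.update x v xv) = C x := by
      intro x xv
      refine Finset.prod_congr rfl fun e' he' => ?_
      rw [edgeVal_update_of_not_mem (hvnot e' he')]
    have hf_upd : ∀ (x : V → ℝ) (xv : ℝ),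
        f (Function.update x v xv) = ENNReal.ofReal (W (x a) xv) * C x := by
      intro x xv
      rw [hfdef]
      simp only
      rw [← Finset.mul_prod_erase s _ he, ← ht]
      congr 1
      · rw [edgeVal_mk, Function.update_of_ne hav', Function.update_self,
          hW.2.1 xv (x a), add_self_div_two]
      · exact hCupd x xv
    set g : (V → ℝ) → ℝ≥0∞ := fun x => D (x a) * C x with hg
    have hgmeas : Measurable g := (hDmeas.comp (measurable_pi_apply a)).mul hCmeas
    have hginner : (fun x => ∫⁻ xv, f (Function.update x v xv) ∂μ01) = g := by
      funext x
      have hm : Measurable fun xv : ℝ => ENNReal.ofReal (W (x a) xv) :=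
        ENNReal.measurable_ofReal.comp
          (Measurable.comp (f := fun t : ℝ => ((x a, t) : ℝ × ℝ)) hW.1
            (measurable_const.prodMk measurable_id))
      simp only [hf_upd x]
      rw [lintegral_mul_const _ hm]
    set pc : (V → ℝ) → ℝ≥0∞ := fun x => ENNReal.ofReal p * C x with hpc
    have hpcmeas : Measurable pc := hCmeas.const_mul _
    have hav2 : a ∈ Finset.univ.erase v := Finset.mem_erase.mpr ⟨hav', Finset.mem_univ a⟩
    have step1 : (∫⋯∫⁻_Finset.univ.erase v, g ∂fun _ => μ01) =
        (∫⋯∫⁻_Finset.univ.erase v, pc ∂fun _ => μ01) := by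
      have hfun : (fun x => ∫⁻ xa, g (Function.update x a xa) ∂μ01) =
          (fun x => ∫⁻ xa, pc (Function.update x a xa) ∂μ01) := by
        funext x
        refine lintegral_congr_ae ?_
        filter_upwards [hD] with r hr
        simp only [hg, hpc, Function.update_self, hr]
      rw [lmarginal_erase' _ hgmeas hav2, lmarginal_erase' _ hpcmeas hav2, hfun]
    have step2 : (∫⋯∫⁻_Finset.univ.erase v, pc ∂fun _ => μ01) =
        (∫⋯∫⁻_Finset.univ, pc ∂fun _ => μ01) := by
      have hfun2 : (fun x => ∫⁻ xv, pc (Function.update x v xv) ∂μ01) = pc := by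
        funext x
        have h1 : ∀ xv : ℝ, pc (Function.update x v xv) = pc x := by
          intro xv; simp only [hpc, hCupd]
        rw [lintegral_congr h1, lintegral_const, measure_univ, mul_one]
      rw [lmarginal_erase' _ hpcmeas (Finset.mem_univ v), hfun2]
    calc ∫⁻ x, f x ∂πμ V = (∫⋯∫⁻_Finset.univ, f ∂fun _ => μ01) 0 := by
          rw [πμ_def]; exact lintegral_eq_lmarginal_univ 0
      _ = (∫⋯∫⁻_Finset.univ.erase v, g ∂fun _ => μ01) 0 := by
          rw [lmarginal_erase' _ hfmeas (Finset.mem_univ v), hginner]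
      _ = (∫⋯∫⁻_Finset.univ, pc ∂fun _ => μ01) 0 := by rw [step1, step2]
      _ = ∫⁻ x, pc x ∂πμ V := by rw [πμ_def]; exact (lintegral_eq_lmarginal_univ 0).symm
      _ = ENNReal.ofReal p * ∫⁻ x, C x ∂πμ V := by
          rw [hpc]; exact lintegral_const_mul _ hCmeas
      _ = ENNReal.ofReal p ^ (n + 1) := by
          rw [ih t htcard htsub, pow_succ, mul_comm]

/-- if almost all degrees are `p` then every forest `F`
satisfies `t(F, W) = p^{|E(F)|}`. -/
theorem stmt8 {V : Type*} [Fintype V] (F : SimpleGraph V) [Fintype F.edgeSet]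
    (hF : F.IsAcyclic) (W : ℝ → ℝ → ℝ) (hW : IsGraphon W) (p : ℝ)
    (hdeg : ∀ᵐ x ∂μ01, (∫ y, W x y ∂μ01) = p) :
    homDensity F W = p ^ F.edgeFinset.card := by
  classical
  have hpnn : 0 ≤ p := by
    have hne : (ae μ01).NeBot := ae_neBot.mpr (IsProbabilityMeasure.ne_zero μ01)
    obtain ⟨x, hx⟩ := hdeg.exists
    rw [← hx]
    exact integral_nonneg fun y => (hW.2.2 x y).1
  have hmeas : Measurable fun x : V → ℝ => prodEdges W F.edgeFinset x :=
    Finset.measurable_prod _ fun e _ => measurable_edgeVal hW.1 e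
  have hnn : ∀ x : V → ℝ, 0 ≤ prodEdges W F.edgeFinset x := fun x =>
    Finset.prod_nonneg fun e _ => edgeVal_nonneg hW x e
  rw [homDensity, homDensitySet,
    integral_eq_lintegral_of_nonneg_ae (Filter.Eventually.of_forall hnn)
      hmeas.aestronglyMeasurable]
  have hpt : ∀ x : V → ℝ, ENNReal.ofReal (prodEdges W F.edgeFinset x) =
      ∏ e ∈ F.edgeFinset, ENNReal.ofReal (edgeVal W x e) := fun x =>
    ENNReal.ofReal_prod_of_nonneg fun e _ => edgeVal_nonneg hW x e
  rw [lintegral_congr hpt,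
    key_lintegral hF hW hdeg F.edgeFinset.card F.edgeFinset rfl subset_rfl,
    ← ENNReal.ofReal_pow hpnn, ENNReal.toReal_ofReal (pow_nonneg hpnn _)]
end
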